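/- For the closed model with K = 1, the radial function R_{ωℓ}(χ) = sqrt(π M_{ωℓ} / (2(ω+1)² sin χ)) P^{-1/2-ℓ}_{1/2+ω}(cos χ), where M_{ωℓ} = Π_{n=0}^{ℓ} ((ω+1)² − n²), solves the radial equation (1/sin²χ) d/dχ (sin²χ dR/dχ) + [(ω+1)² − 1 − ℓ(ℓ+1)/sin²χ] R = 0 on (0, π). -/

import Mathlib

open scoped Real

/-- Gauss hypergeometric series ₂F₁(a,b;c;x), real parameters. -/
noncomputable def hyp2F1 (a b c x : ℝ) : ℝ :=
  ∑' n : ℕ, ((ascPochhammer ℝ n).eval a * (ascPochhammer ℝ n).eval b) /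
    ((ascPochhammer ℝ n).eval c * (n.factorial : ℝ)) * x ^ n

/-- Ferrers function (associated Legendre function of the first kind) on `(-1, 1)`. -/
noncomputable def legendreP (μ ν x : ℝ) : ℝ :=
  (1 / Real.Gamma (1 - μ)) * ((1 + x) / (1 - x)) ^ (μ / 2) *
    hyp2F1 (-ν) (ν + 1) (1 - μ) ((1 - x) / 2)

/-- `M_{ωℓ} = ∏_{n=0}^{ℓ} ((ω+1)² − n²)`. -/
noncomputable def Mcoef (ω ℓ : ℕ) : ℝ :=
  ∏ n ∈ Finset.range (ℓ + 1), (((ω : ℝ) + 1) ^ 2 - (n : ℝ) ^ 2)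

/-- The radial function of the closed model `K = 1`,
`R_{ωℓ}(χ) = √(π M_{ωℓ}/(2(ω+1)² sin χ)) P^{-1/2-ℓ}_{1/2+ω}(cos χ)`. -/
noncomputable def Rclosed (ω ℓ : ℕ) (χ : ℝ) : ℝ :=
  Real.sqrt (π * Mcoef ω ℓ / (2 * ((ω : ℝ) + 1) ^ 2 * Real.sin χ)) *
    legendreP (-(1 / 2) - ℓ) (1 / 2 + ω) (Real.cos χ)


open Filter Topology

noncomputable def kcoef (a b c : ℝ) (n : ℕ) : ℝ :=
  ((ascPochhammer ℝ n).eval a * (ascPochhammer ℝ n).eval b) /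
    ((ascPochhammer ℝ n).eval c * (n.factorial : ℝ))

lemma kcoef_succ (a b c : ℝ) (hc : 0 < c) (n : ℕ) :
    kcoef a b c (n + 1) * ((c + n) * (n + 1)) = kcoef a b c n * ((a + n) * (b + n)) := by
  have hcp : 0 < (ascPochhammer ℝ n).eval c := ascPochhammer_pos n c hc
  have hcn : (0:ℝ) < c + n := by positivity
  have hf : (0:ℝ) < (n.factorial : ℝ) := by positivity
  unfold kcoef
  rw [ascPochhammer_succ_eval, ascPochhammer_succ_eval, ascPochhammer_succ_eval,
    Nat.factorial_succ]
  push_cast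
  field_simp

lemma abs_kcoef_succ_le (a b c : ℝ) (hc : 0 < c) (n : ℕ) :
    |kcoef a b c (n + 1)| ≤
      |kcoef a b c n| * (((|a| + n) * (|b| + n)) / ((c + n) * (n + 1))) := by
  have hcn : (0:ℝ) < (c + n) * (n + 1) := by positivity
  have h := kcoef_succ a b c hc n
  have h2 : kcoef a b c (n + 1) = kcoef a b c n * ((a + n) * (b + n)) / ((c + n) * (n + 1)) := by
    field_simp
    linarith [h]
  rw [h2, abs_div, abs_mul, abs_mul, abs_of_pos hcn]
  rw [div_le_iff₀ hcn]
  have h3 : |a + n| ≤ |a| + n := by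
    calc |a + n| ≤ |a| + |(n:ℝ)| := abs_add_le _ _
    _ = |a| + n := by rw [abs_of_nonneg (by positivity : (0:ℝ) ≤ (n:ℝ))]
  have h4 : |b + n| ≤ |b| + n := by
    calc |b + n| ≤ |b| + |(n:ℝ)| := abs_add_le _ _
    _ = |b| + n := by rw [abs_of_nonneg (by positivity : (0:ℝ) ≤ (n:ℝ))]
  have h5 : |a + n| * |b + n| ≤ (|a| + n) * (|b| + n) := by
    apply mul_le_mul h3 h4 (abs_nonneg _) (by positivity)
  have := mul_le_mul_of_nonneg_left h5 (abs_nonneg (kcoef a b c n))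
  calc |kcoef a b c n| * (|a+n| * |b+n|)
      ≤ |kcoef a b c n| * ((|a| + n) * (|b| + n)) := this
    _ = |kcoef a b c n| * (((|a| + n) * (|b| + n)) / ((c + n) * (n + 1))) * ((c+n)*(n+1)) := by
        field_simp

lemma tendsto_aux (d e : ℝ) :
    Tendsto (fun n : ℕ => (d + (n : ℝ)) / (e + (n : ℝ))) atTop (𝓝 1) := by
  have hden : Tendsto (fun n : ℕ => e + (n : ℝ)) atTop atTop :=
    tendsto_atTop_add_const_left _ e tendsto_natCast_atTop_atTop
  have h1 : Tendsto (fun n : ℕ => (d - e) / (e + (n : ℝ))) atTop (𝓝 0) :=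
    Tendsto.div_atTop tendsto_const_nhds hden
  have h2 : Tendsto (fun n : ℕ => 1 + (d - e) / (e + (n : ℝ))) atTop (𝓝 1) := by
    simpa using tendsto_const_nhds.add h1
  apply h2.congr'
  filter_upwards [hden.eventually_gt_atTop 0] with n hn
  field_simp
  ring

lemma summable_master (a b c : ℝ) (hc : 0 < c) {s : ℝ} (h0 : 0 ≤ s) (h1 : s < 1) :
    Summable fun n : ℕ => |kcoef a b c n| * ((n : ℝ) + 2) ^ 2 * s ^ n := by
  rcases eq_or_lt_of_le h0 with h0' | h0'
  · apply summable_of_ne_finset_zero (s := ({0} : Finset ℕ))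
    intro n hn
    simp only [Finset.mem_singleton] at hn
    simp [← h0', zero_pow hn]
  have key : Tendsto
      (fun n : ℕ => (|a| + (n : ℝ)) / (1 + (n : ℝ)) * ((|b| + (n : ℝ)) / (c + (n : ℝ))) *
        ((3 + (n : ℝ)) / (2 + (n : ℝ))) ^ 2 * s) atTop (𝓝 s) := by
    have := (((tendsto_aux (|a|) 1).mul (tendsto_aux (|b|) c)).mul
      ((tendsto_aux 3 2).pow 2)).mul_const s
    simpa using this
  apply summable_of_ratio_norm_eventually_le (r := (1 + s) / 2) (by linarith)
  filter_upwards [key.eventually_le_const (show s < (1 + s) / 2 by linarith)] with n hn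
  have hn1 : (0:ℝ) < (n : ℝ) + 1 := by positivity
  have hcn : (0:ℝ) < c + (n : ℝ) := by positivity
  have hsp : ∀ m : ℕ, (0:ℝ) ≤ s ^ m := fun m => pow_nonneg h0 m
  rw [Real.norm_eq_abs, Real.norm_eq_abs,
    abs_of_nonneg (show (0:ℝ) ≤ |kcoef a b c (n+1)| * ((↑(n+1) : ℝ) + 2) ^ 2 * s ^ (n+1) from
      mul_nonneg (by positivity) (hsp _)),
    abs_of_nonneg (show (0:ℝ) ≤ |kcoef a b c n| * ((n : ℝ) + 2) ^ 2 * s ^ n from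
      mul_nonneg (by positivity) (hsp _))]
  have step1 : |kcoef a b c (n + 1)| * ((↑(n + 1) : ℝ) + 2) ^ 2 * s ^ (n + 1) ≤
      |kcoef a b c n| * ((|a| + n) * (|b| + n) / ((c + n) * (n + 1))) *
        ((↑(n + 1) : ℝ) + 2) ^ 2 * s ^ (n + 1) := by
    have := abs_kcoef_succ_le a b c hc n
    have hs : (0:ℝ) ≤ s ^ (n+1) := pow_nonneg h0 _
    apply mul_le_mul_of_nonneg_right _ hs
    apply mul_le_mul_of_nonneg_right this (by positivity)
  have step2 : |kcoef a b c n| * ((|a| + n) * (|b| + n) / ((c + n) * (n + 1))) *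
        ((↑(n + 1) : ℝ) + 2) ^ 2 * s ^ (n + 1) =
      ((|a| + (n : ℝ)) / (1 + (n : ℝ)) * ((|b| + (n : ℝ)) / (c + (n : ℝ))) *
        ((3 + (n : ℝ)) / (2 + (n : ℝ))) ^ 2 * s) * (|kcoef a b c n| * ((n : ℝ) + 2) ^ 2 * s ^ n) := by
    push_cast
    rw [pow_succ]
    field_simp
    ring
  have step3 : ((|a| + (n : ℝ)) / (1 + (n : ℝ)) * ((|b| + (n : ℝ)) / (c + (n : ℝ))) *
        ((3 + (n : ℝ)) / (2 + (n : ℝ))) ^ 2 * s) * (|kcoef a b c n| * ((n : ℝ) + 2) ^ 2 * s ^ n) ≤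
      (1 + s) / 2 * (|kcoef a b c n| * ((n : ℝ) + 2) ^ 2 * s ^ n) :=
    mul_le_mul_of_nonneg_right hn (mul_nonneg (by positivity) (pow_nonneg h0 _))
  calc |kcoef a b c (n + 1)| * ((↑(n + 1) : ℝ) + 2) ^ 2 * s ^ (n + 1) ≤ _ := step1
    _ = _ := step2
    _ ≤ _ := step3

noncomputable def Fsum (a b c t : ℝ) : ℝ := ∑' n : ℕ, kcoef a b c n * t ^ n
noncomputable def Fsum1 (a b c t : ℝ) : ℝ :=
  ∑' n : ℕ, ((n : ℝ) + 1) * kcoef a b c (n + 1) * t ^ n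
noncomputable def Fsum2 (a b c t : ℝ) : ℝ :=
  ∑' n : ℕ, ((n : ℝ) + 2) * ((n : ℝ) + 1) * kcoef a b c (n + 2) * t ^ n

lemma summable_aux (a b c : ℝ) (hc : 0 < c) (j : ℕ) {s : ℝ} (h0 : 0 < s) (h1 : s < 1) :
    Summable fun n : ℕ => |kcoef a b c (n + j)| * ((n : ℝ) + 2) ^ 2 * s ^ n := by
  have hm := (summable_nat_add_iff j).2 (summable_master a b c hc h0.le h1)
  have hm2 := hm.mul_left ((s ^ j)⁻¹)
  apply Summable.of_nonneg_of_le
    (fun n => by positivity) _ hm2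
  intro n
  have hsj : (0:ℝ) < s ^ j := by positivity
  have e1 : (s ^ j)⁻¹ * (|kcoef a b c (n + j)| * ((↑(n + j) : ℝ) + 2) ^ 2 * s ^ (n + j)) =
      |kcoef a b c (n + j)| * ((↑(n + j) : ℝ) + 2) ^ 2 * s ^ n := by
    rw [pow_add]
    field_simp
  rw [e1]
  apply mul_le_mul_of_nonneg_right _ (pow_nonneg h0.le n)
  apply mul_le_mul_of_nonneg_left _ (abs_nonneg _)
  apply pow_le_pow_left₀ (by positivity)
  push_cast
  linarith [Nat.cast_nonneg (α := ℝ) j]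

/-- generic comparison: a sequence dominated termwise by the aux series is summable. -/
lemma summable_of_le_aux (a b c : ℝ) (hc : 0 < c) (j : ℕ) {s : ℝ} (h0 : 0 < s) (h1 : s < 1)
    {f : ℕ → ℝ}
    (hf : ∀ n, |f n| ≤ |kcoef a b c (n + j)| * ((n : ℝ) + 2) ^ 2 * s ^ n) : Summable f :=
  Summable.of_norm_bounded (summable_aux a b c hc j h0 h1) (fun n => by
    rw [Real.norm_eq_abs]; exact hf n)

section summ
variable {a b c t : ℝ}

lemma bb {K T P Q : ℝ} (hK : 0 ≤ K) (hT : 0 ≤ T) (hPQ : P ≤ Q) : P * K * T ≤ K * Q * T := by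
  calc P * K * T = K * P * T := by ring
    _ ≤ K * Q * T := mul_le_mul_of_nonneg_right (mul_le_mul_of_nonneg_left hPQ hK) hT

lemma cast_sq_ge (n : ℕ) : (1:ℝ) ≤ ((n : ℝ) + 2) ^ 2 := by
  nlinarith [Nat.cast_nonneg (α := ℝ) n]

lemma summ_S0 (hc : 0 < c) (h0 : 0 < t) (h1 : t < 1) :
    Summable fun n : ℕ => kcoef a b c n * t ^ n := by
  apply summable_of_le_aux a b c hc 0 h0 h1
  intro n
  rw [abs_mul, abs_of_pos (pow_pos h0 n)]
  have h2 := cast_sq_ge n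
  have h3 := abs_nonneg (kcoef a b c n)
  have h4 := pow_nonneg h0.le n
  simp only [Nat.add_zero]
  simpa using bb h3 h4 (cast_sq_ge n)

lemma summ_S1 (hc : 0 < c) (h0 : 0 < t) (h1 : t < 1) :
    Summable fun n : ℕ => ((n : ℝ) + 1) * kcoef a b c (n + 1) * t ^ n := by
  apply summable_of_le_aux a b c hc 1 h0 h1
  intro n
  rw [abs_mul, abs_mul, abs_of_pos (pow_pos h0 n),
    abs_of_pos (show (0:ℝ) < (n:ℝ) + 1 by positivity)]
  have h2 := Nat.cast_nonneg (α := ℝ) n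
  have h3 := abs_nonneg (kcoef a b c (n + 1))
  have h4 := pow_nonneg h0.le n
  exact bb h3 h4 (by nlinarith)

lemma summ_S2 (hc : 0 < c) (h0 : 0 < t) (h1 : t < 1) :
    Summable fun n : ℕ => ((n : ℝ) + 2) * ((n : ℝ) + 1) * kcoef a b c (n + 2) * t ^ n := by
  apply summable_of_le_aux a b c hc 2 h0 h1
  intro n
  rw [abs_mul, abs_mul, abs_mul, abs_of_pos (pow_pos h0 n),
    abs_of_pos (show (0:ℝ) < (n:ℝ) + 2 by positivity),
    abs_of_pos (show (0:ℝ) < (n:ℝ) + 1 by positivity)]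
  have h2 := Nat.cast_nonneg (α := ℝ) n
  have h3 := abs_nonneg (kcoef a b c (n + 2))
  have h4 := pow_nonneg h0.le n
  exact bb h3 h4 (by nlinarith)

lemma summ_S1' (hc : 0 < c) (h0 : 0 < t) (h1 : t < 1) :
    Summable fun n : ℕ => (n : ℝ) * kcoef a b c n * t ^ n := by
  apply summable_of_le_aux a b c hc 0 h0 h1
  intro n
  rw [abs_mul, abs_mul, abs_of_pos (pow_pos h0 n),
    abs_of_nonneg (Nat.cast_nonneg (α := ℝ) n)]
  have h2 := Nat.cast_nonneg (α := ℝ) n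
  have h3 := abs_nonneg (kcoef a b c n)
  have h4 := pow_nonneg h0.le n
  simp only [Nat.add_zero]
  exact bb h3 h4 (by nlinarith)

lemma summ_S2a (hc : 0 < c) (h0 : 0 < t) (h1 : t < 1) :
    Summable fun n : ℕ => ((n : ℝ) + 1) * (n : ℝ) * kcoef a b c (n + 1) * t ^ n := by
  apply summable_of_le_aux a b c hc 1 h0 h1
  intro n
  rw [abs_mul, abs_mul, abs_mul, abs_of_pos (pow_pos h0 n),
    abs_of_nonneg (Nat.cast_nonneg (α := ℝ) n),
    abs_of_pos (show (0:ℝ) < (n:ℝ) + 1 by positivity)]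
  have h2 := Nat.cast_nonneg (α := ℝ) n
  have h3 := abs_nonneg (kcoef a b c (n + 1))
  have h4 := pow_nonneg h0.le n
  exact bb h3 h4 (by nlinarith)

lemma summ_S2b (hc : 0 < c) (h0 : 0 < t) (h1 : t < 1) :
    Summable fun n : ℕ => (n : ℝ) * ((n : ℝ) - 1) * kcoef a b c n * t ^ n := by
  apply summable_of_le_aux a b c hc 0 h0 h1
  intro n
  rw [abs_mul, abs_mul, abs_of_pos (pow_pos h0 n)]
  have h2 := Nat.cast_nonneg (α := ℝ) n
  have h3 := abs_nonneg (kcoef a b c n)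
  have h4 := pow_nonneg h0.le n
  have h5 : |(n:ℝ) * ((n:ℝ) - 1)| ≤ ((n:ℝ) + 2) ^ 2 := by
    rw [abs_mul, abs_of_nonneg h2]
    have : |(n:ℝ) - 1| ≤ (n:ℝ) + 1 := by
      rw [abs_le]; constructor <;> linarith
    nlinarith [abs_nonneg ((n:ℝ) - 1)]
  simp only [Nat.add_zero]
  exact bb h3 h4 h5

end summ

section deriv
variable {a b c : ℝ}

lemma hasDerivAt_Fsum (hc : 0 < c) {t : ℝ} (h0 : 0 < t) (h1 : t < 1) :
    HasDerivAt (fun y => Fsum a b c y) (Fsum1 a b c t) t := by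
  set r : ℝ := (1 + t) / 2 with hr
  have hr0 : (0:ℝ) < r := by rw [hr]; linarith
  have hr1 : r < 1 := by rw [hr]; linarith
  have htr : t < r := by rw [hr]; linarith
  have hbound : ∀ (n : ℕ) (y : ℝ), y ∈ Set.Ioo (-r) r →
      ‖kcoef a b c n * ((n : ℝ) * y ^ (n - 1))‖ ≤
        r⁻¹ * (|kcoef a b c n| * ((n : ℝ) + 2) ^ 2 * r ^ n) := by
    intro n y hy
    have hyr : |y| ≤ r := by
      rw [abs_le]; exact ⟨hy.1.le, hy.2.le⟩
    match n with
    | 0 => simp; positivity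
    | (m + 1) =>
      have e1 : r⁻¹ * (|kcoef a b c (m+1)| * ((↑(m+1) : ℝ) + 2) ^ 2 * r ^ (m+1)) =
          |kcoef a b c (m+1)| * ((↑(m+1) : ℝ) + 2) ^ 2 * r ^ m := by
        rw [pow_succ]; field_simp; ring
      rw [e1, Real.norm_eq_abs, abs_mul, abs_mul]
      have h2 : |((m:ℝ)+1)| = (m:ℝ)+1 := abs_of_pos (by positivity)
      have h3 : |y ^ ((m+1) - 1)| ≤ r ^ m := by
        simp only [Nat.add_sub_cancel, abs_pow]
        exact pow_le_pow_left₀ (abs_nonneg y) hyr m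
      push_cast
      push_cast at h2
      rw [h2]
      calc |kcoef a b c (m+1)| * (((m:ℝ)+1) * |y ^ ((m+1) - 1)|) ≤
          |kcoef a b c (m+1)| * (((m:ℝ)+1) * r ^ m) := by
            apply mul_le_mul_of_nonneg_left _ (abs_nonneg _)
            exact mul_le_mul_of_nonneg_left h3 (by positivity)
        _ ≤ |kcoef a b c (m+1)| * ((m:ℝ)+1+2) ^ 2 * r ^ m := by
            rw [mul_assoc]
            apply mul_le_mul_of_nonneg_left _ (abs_nonneg _)
            apply mul_le_mul_of_nonneg_right _ (pow_nonneg hr0.le m)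
            nlinarith [Nat.cast_nonneg (α := ℝ) m]
  have hder : ∀ (n : ℕ) (y : ℝ), y ∈ Set.Ioo (-r) r →
      HasDerivAt (fun z => kcoef a b c n * z ^ n) (kcoef a b c n * ((n : ℝ) * y ^ (n - 1))) y :=
    fun n y _ => (hasDerivAt_pow n y).const_mul (kcoef a b c n)
  have hu : Summable fun n : ℕ => r⁻¹ * (|kcoef a b c n| * ((n : ℝ) + 2) ^ 2 * r ^ n) :=
    (summable_master a b c hc hr0.le hr1).mul_left _
  have h00 : Summable fun n : ℕ => kcoef a b c n * (0:ℝ) ^ n := by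
    apply summable_of_ne_finset_zero (s := ({0} : Finset ℕ))
    intro n hn
    simp only [Finset.mem_singleton] at hn
    simp [zero_pow hn]
  have hmem : t ∈ Set.Ioo (-r) r := ⟨by linarith, htr⟩
  have h0mem : (0:ℝ) ∈ Set.Ioo (-r) r := ⟨by linarith, hr0⟩
  have H := hasDerivAt_tsum_of_isPreconnected hu isOpen_Ioo
    (isPreconnected_Ioo) hder hbound h0mem h00 hmem
  have hsum : Summable fun n : ℕ => kcoef a b c n * ((n : ℝ) * t ^ (n - 1)) :=
    Summable.of_norm_bounded hu (fun n => hbound n t hmem)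
  have hshift : (∑' n : ℕ, kcoef a b c n * ((n : ℝ) * t ^ (n - 1))) = Fsum1 a b c t := by
    rw [Summable.tsum_eq_zero_add hsum]
    norm_num
    apply tsum_congr
    intro n
    norm_num
    ring
  rw [hshift] at H
  exact H

lemma hasDerivAt_Fsum1 (hc : 0 < c) {t : ℝ} (h0 : 0 < t) (h1 : t < 1) :
    HasDerivAt (fun y => Fsum1 a b c y) (Fsum2 a b c t) t := by
  set r : ℝ := (1 + t) / 2 with hr
  have hr0 : (0:ℝ) < r := by rw [hr]; linarith
  have hr1 : r < 1 := by rw [hr]; linarith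
  have htr : t < r := by rw [hr]; linarith
  have hbound : ∀ (n : ℕ) (y : ℝ), y ∈ Set.Ioo (-r) r →
      ‖((n : ℝ) + 1) * kcoef a b c (n + 1) * ((n : ℝ) * y ^ (n - 1))‖ ≤
        r⁻¹ * (|kcoef a b c (n + 1)| * ((n : ℝ) + 2) ^ 2 * r ^ n) := by
    intro n y hy
    have hyr : |y| ≤ r := by
      rw [abs_le]; exact ⟨hy.1.le, hy.2.le⟩
    match n with
    | 0 => simp; positivity
    | (m + 1) =>
      have hyp : |y ^ m| ≤ r ^ m := by
        rw [abs_pow]; exact pow_le_pow_left₀ (abs_nonneg y) hyr m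
      have e1 : r⁻¹ * (|kcoef a b c (m+1+1)| * ((↑(m+1) : ℝ) + 2) ^ 2 * r ^ (m+1)) =
          |kcoef a b c (m+1+1)| * (((m:ℝ)+1) + 2) ^ 2 * r ^ m := by
        rw [pow_succ]; push_cast; field_simp; ring
      rw [e1, Real.norm_eq_abs]
      have lhs_eq : |((↑(m+1):ℝ) + 1) * kcoef a b c (m+1+1) * ((↑(m+1):ℝ) * y ^ (m+1-1))| =
          (((m:ℝ)+2) * ((m:ℝ)+1)) * |kcoef a b c (m+1+1)| * |y ^ m| := by
        simp only [Nat.add_sub_cancel]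
        rw [abs_mul, abs_mul, abs_mul,
          abs_of_pos (show (0:ℝ) < (↑(m+1):ℝ)+1 by positivity),
          abs_of_pos (show (0:ℝ) < (↑(m+1):ℝ) by positivity)]
        push_cast; ring
      rw [lhs_eq]
      calc (((m:ℝ)+2) * ((m:ℝ)+1)) * |kcoef a b c (m+1+1)| * |y ^ m|
          ≤ (((m:ℝ)+2) * ((m:ℝ)+1)) * |kcoef a b c (m+1+1)| * r ^ m :=
            mul_le_mul_of_nonneg_left hyp (by positivity)
        _ ≤ |kcoef a b c (m+1+1)| * (((m:ℝ)+1) + 2) ^ 2 * r ^ m :=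
            bb (abs_nonneg _) (pow_nonneg hr0.le m) (by nlinarith [Nat.cast_nonneg (α := ℝ) m])
  have hder : ∀ (n : ℕ) (y : ℝ), y ∈ Set.Ioo (-r) r →
      HasDerivAt (fun z => ((n : ℝ) + 1) * kcoef a b c (n + 1) * z ^ n)
        (((n : ℝ) + 1) * kcoef a b c (n + 1) * ((n : ℝ) * y ^ (n - 1))) y :=
    fun n y _ => (hasDerivAt_pow n y).const_mul _
  have hu : Summable fun n : ℕ => r⁻¹ * (|kcoef a b c (n + 1)| * ((n : ℝ) + 2) ^ 2 * r ^ n) :=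
    (summable_aux a b c hc 1 hr0 hr1).mul_left _
  have h00 : Summable fun n : ℕ => ((n : ℝ) + 1) * kcoef a b c (n + 1) * (0:ℝ) ^ n := by
    apply summable_of_ne_finset_zero (s := ({0} : Finset ℕ))
    intro n hn
    simp only [Finset.mem_singleton] at hn
    simp [zero_pow hn]
  have hmem : t ∈ Set.Ioo (-r) r := ⟨by linarith, htr⟩
  have h0mem : (0:ℝ) ∈ Set.Ioo (-r) r := ⟨by linarith, hr0⟩
  have H := hasDerivAt_tsum_of_isPreconnected hu isOpen_Ioo
    (isPreconnected_Ioo) hder hbound h0mem h00 hmem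
  have hsum : Summable fun n : ℕ => ((n : ℝ) + 1) * kcoef a b c (n + 1) * ((n : ℝ) * t ^ (n - 1)) :=
    Summable.of_norm_bounded hu (fun n => hbound n t hmem)
  have hshift : (∑' n : ℕ, ((n : ℝ) + 1) * kcoef a b c (n + 1) * ((n : ℝ) * t ^ (n - 1))) =
      Fsum2 a b c t := by
    rw [Summable.tsum_eq_zero_add hsum]
    norm_num
    apply tsum_congr
    intro n
    norm_num
    ring
  rw [hshift] at H
  exact H

end deriv

lemma hyp_ode (a b c : ℝ) (hc : 0 < c) {t : ℝ} (h0 : 0 < t) (h1 : t < 1) :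
    t * (1 - t) * Fsum2 a b c t + (c - (a + b + 1) * t) * Fsum1 a b c t
      - a * b * Fsum a b c t = 0 := by
  have S0 := summ_S0 (a := a) (b := b) hc h0 h1
  have S1 := summ_S1 (a := a) (b := b) hc h0 h1
  have S2 := summ_S2 (a := a) (b := b) hc h0 h1
  have S1' := summ_S1' (a := a) (b := b) hc h0 h1
  have S2a := summ_S2a (a := a) (b := b) hc h0 h1
  have S2b := summ_S2b (a := a) (b := b) hc h0 h1
  -- shift identities
  have E1 : t * Fsum1 a b c t = ∑' n : ℕ, (n : ℝ) * kcoef a b c n * t ^ n := by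
    rw [Summable.tsum_eq_zero_add S1']
    norm_num
    rw [Fsum1, ← tsum_mul_left]
    apply tsum_congr
    intro n
    push_cast
    rw [pow_succ]
    ring
  have E2 : t * Fsum2 a b c t = ∑' n : ℕ, ((n : ℝ) + 1) * (n : ℝ) * kcoef a b c (n + 1) * t ^ n := by
    rw [Summable.tsum_eq_zero_add S2a]
    norm_num
    rw [Fsum2, ← tsum_mul_left]
    apply tsum_congr
    intro n
    push_cast
    rw [pow_succ]
    ring
  have E3 : t * (∑' n : ℕ, ((n : ℝ) + 1) * (n : ℝ) * kcoef a b c (n + 1) * t ^ n)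
      = ∑' n : ℕ, (n : ℝ) * ((n : ℝ) - 1) * kcoef a b c n * t ^ n := by
    rw [Summable.tsum_eq_zero_add S2b]
    norm_num
    rw [← tsum_mul_left]
    apply tsum_congr
    intro n
    push_cast
    rw [pow_succ]
    ring
  -- the termwise combination vanishes
  have combo : ∀ n : ℕ,
      (((n : ℝ) + 1) * (n : ℝ) * kcoef a b c (n + 1) * t ^ n
        - (n : ℝ) * ((n : ℝ) - 1) * kcoef a b c n * t ^ n
        + c * (((n : ℝ) + 1) * kcoef a b c (n + 1) * t ^ n)
        - (a + b + 1) * ((n : ℝ) * kcoef a b c n * t ^ n)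
        - a * b * (kcoef a b c n * t ^ n)) = 0 := by
    intro n
    have h := kcoef_succ a b c hc n
    linear_combination t ^ n * h
  have expand : t * (1 - t) * Fsum2 a b c t + (c - (a + b + 1) * t) * Fsum1 a b c t
      - a * b * Fsum a b c t
      = t * Fsum2 a b c t - t * (t * Fsum2 a b c t) + c * Fsum1 a b c t
        - (a + b + 1) * (t * Fsum1 a b c t) - a * b * Fsum a b c t := by ring
  rw [expand, E2, E3, E1, Fsum1, Fsum, ← tsum_mul_left (a := c), ← tsum_mul_left (a := a + b + 1),
    ← tsum_mul_left (a := a * b)]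
  rw [← Summable.tsum_sub S2a S2b, ← Summable.tsum_add (S2a.sub S2b) (S1.mul_left c),
    ← Summable.tsum_sub ((S2a.sub S2b).add (S1.mul_left c)) (S1'.mul_left (a + b + 1)),
    ← Summable.tsum_sub (((S2a.sub S2b).add (S1.mul_left c)).sub (S1'.mul_left (a + b + 1)))
      (S0.mul_left (a * b))]
  rw [show (0:ℝ) = ∑' _ : ℕ, (0:ℝ) from (tsum_zero).symm]
  apply tsum_congr
  intro n
  exact combo n


section part2

noncomputable def aP (ω : ℕ) : ℝ := -(1 / 2 + (ω : ℝ))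
noncomputable def bP (ω : ℕ) : ℝ := 1 / 2 + (ω : ℝ) + 1
noncomputable def cP (ℓ : ℕ) : ℝ := 1 - (-(1 / 2) - (ℓ : ℝ))

lemma cP_pos (ℓ : ℕ) : 0 < cP ℓ := by
  unfold cP; have := Nat.cast_nonneg (α := ℝ) ℓ; linarith

lemma hyp2F1_eq_Fsum (a b c x : ℝ) : hyp2F1 a b c x = Fsum a b c x := rfl

noncomputable def Gf (ℓ : ℕ) (x : ℝ) : ℝ := Real.sin (x / 2) ^ ℓ / Real.cos (x / 2) ^ (ℓ + 1)

noncomputable def Bf (ℓ : ℕ) (x : ℝ) : ℝ :=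
  ((ℓ : ℝ) * Real.cos (x / 2) ^ 2 + ((ℓ : ℝ) + 1) * Real.sin (x / 2) ^ 2) /
    (2 * Real.sin (x / 2) * Real.cos (x / 2))

noncomputable def Wf (ω ℓ : ℕ) (x : ℝ) : ℝ :=
  Gf ℓ x * Fsum (aP ω) (bP ω) (cP ℓ) (Real.sin (x / 2) ^ 2)

noncomputable def Wd (ω ℓ : ℕ) (x : ℝ) : ℝ :=
  Gf ℓ x * Bf ℓ x * Fsum (aP ω) (bP ω) (cP ℓ) (Real.sin (x / 2) ^ 2) +
    Gf ℓ x * (Fsum1 (aP ω) (bP ω) (cP ℓ) (Real.sin (x / 2) ^ 2) *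
      (Real.sin (x / 2) * Real.cos (x / 2)))

noncomputable def Wdd (ω ℓ : ℕ) (x : ℝ) : ℝ :=
  Gf ℓ x * Bf ℓ x * (Bf ℓ x * Fsum (aP ω) (bP ω) (cP ℓ) (Real.sin (x / 2) ^ 2) +
      Real.sin (x / 2) * Real.cos (x / 2) * Fsum1 (aP ω) (bP ω) (cP ℓ) (Real.sin (x / 2) ^ 2)) +
    Gf ℓ x * (
      (Real.sin (x / 2) * Real.cos (x / 2) * (2 * Real.sin (x / 2) * Real.cos (x / 2)) -
          ((ℓ : ℝ) * Real.cos (x / 2) ^ 2 + ((ℓ : ℝ) + 1) * Real.sin (x / 2) ^ 2) *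
            (Real.cos (x / 2) ^ 2 - Real.sin (x / 2) ^ 2)) /
        (2 * Real.sin (x / 2) * Real.cos (x / 2)) ^ 2 *
        Fsum (aP ω) (bP ω) (cP ℓ) (Real.sin (x / 2) ^ 2) +
      Bf ℓ x * (Real.sin (x / 2) * Real.cos (x / 2)) *
        Fsum1 (aP ω) (bP ω) (cP ℓ) (Real.sin (x / 2) ^ 2) +
      (Real.cos (x / 2) ^ 2 - Real.sin (x / 2) ^ 2) / 2 *
        Fsum1 (aP ω) (bP ω) (cP ℓ) (Real.sin (x / 2) ^ 2) +
      (Real.sin (x / 2) * Real.cos (x / 2)) ^ 2 *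
        Fsum2 (aP ω) (bP ω) (cP ℓ) (Real.sin (x / 2) ^ 2))

lemma hasDerivAt_sin_half (x : ℝ) :
    HasDerivAt (fun y => Real.sin (y / 2)) (Real.cos (x / 2) * (1 / 2)) x := by
  have h1 : HasDerivAt (fun y : ℝ => y / 2) (1 / 2) x := by
    simpa using (hasDerivAt_id x).div_const 2
  exact (Real.hasDerivAt_sin (x / 2)).comp x h1

lemma hasDerivAt_cos_half (x : ℝ) :
    HasDerivAt (fun y => Real.cos (y / 2)) (-Real.sin (x / 2) * (1 / 2)) x := by
  have h1 : HasDerivAt (fun y : ℝ => y / 2) (1 / 2) x := by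
    simpa using (hasDerivAt_id x).div_const 2
  exact (Real.hasDerivAt_cos (x / 2)).comp x h1

lemma hasDerivAt_u (x : ℝ) :
    HasDerivAt (fun y => Real.sin (y / 2) ^ 2) (Real.sin (x / 2) * Real.cos (x / 2)) x := by
  have := (hasDerivAt_sin_half x).pow 2
  refine this.congr_deriv ?_
  norm_num
  ring

lemma sin_eq_half (x : ℝ) : Real.sin x = 2 * Real.sin (x / 2) * Real.cos (x / 2) := by
  rw [show x = 2 * (x / 2) by ring, Real.sin_two_mul]
  norm_num

lemma cos_eq_half (x : ℝ) : Real.cos x = Real.cos (x / 2) ^ 2 - Real.sin (x / 2) ^ 2 := by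
  rw [show x = 2 * (x / 2) by ring, Real.cos_two_mul']
  norm_num

section geom
variable {x : ℝ} (hx : x ∈ Set.Ioo 0 π)
include hx

lemma sin_half_pos : 0 < Real.sin (x / 2) := by
  apply Real.sin_pos_of_pos_of_lt_pi (by linarith [hx.1])
  have := hx.2
  have hπ := Real.pi_pos
  linarith

lemma cos_half_pos : 0 < Real.cos (x / 2) := by
  apply Real.cos_pos_of_mem_Ioo
  constructor
  · have hπ := Real.pi_pos
    have := hx.1
    linarith
  · have := hx.2
    linarith

lemma sin_half_sq_lt_one : Real.sin (x / 2) ^ 2 < 1 := by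
  have h1 := Real.sin_sq_add_cos_sq (x / 2)
  have h2 := cos_half_pos hx
  nlinarith

end geom
end part2


section part3
variable {x : ℝ}

lemma hasDerivAt_G (ℓ : ℕ) (hx : x ∈ Set.Ioo 0 π) :
    HasDerivAt (Gf ℓ) (Gf ℓ x * Bf ℓ x) x := by
  have hs := sin_half_pos hx
  have hc := cos_half_pos hx
  have hL := (hasDerivAt_sin_half x).pow ℓ
  have hM := (hasDerivAt_cos_half x).pow (ℓ + 1)
  have hdiv := hL.div hM (pow_ne_zero _ hc.ne')
  have h2 : HasDerivAt (Gf ℓ) (((ℓ:ℝ) * Real.sin (x/2) ^ (ℓ-1) * (Real.cos (x/2) * (1/2)) *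
      Real.cos (x/2) ^ (ℓ+1) - Real.sin (x/2) ^ ℓ *
        ((↑(ℓ+1):ℝ) * Real.cos (x/2) ^ (ℓ+1-1) * (-Real.sin (x/2) * (1/2)))) /
      (Real.cos (x/2) ^ (ℓ+1)) ^ 2) x := hdiv
  convert h2 using 1
  simp only [Nat.add_sub_cancel]
  unfold Gf Bf
  rcases ℓ with _ | m
  · push_cast
    field_simp
    ring
  · simp only [Nat.add_sub_cancel]
    push_cast
    field_simp
    ring

lemma hasDerivAt_W (ω ℓ : ℕ) (hx : x ∈ Set.Ioo 0 π) :
    HasDerivAt (Wf ω ℓ) (Wd ω ℓ x) x := by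
  have hs := sin_half_pos hx
  have hu0 : 0 < Real.sin (x/2) ^ 2 := pow_pos hs 2
  have hu1 := sin_half_sq_lt_one hx
  have hF := hasDerivAt_Fsum (a := aP ω) (b := bP ω) (cP_pos ℓ) hu0 hu1
  have hFc := hF.comp x (hasDerivAt_u x)
  exact (hasDerivAt_G ℓ hx).mul hFc

lemma hasDerivAt_N (ℓ : ℕ) (x : ℝ) :
    HasDerivAt (fun y => (ℓ : ℝ) * Real.cos (y/2) ^ 2 + ((ℓ : ℝ) + 1) * Real.sin (y/2) ^ 2)
      (Real.sin (x/2) * Real.cos (x/2)) x := by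
  have h1 := ((hasDerivAt_cos_half x).pow 2).const_mul ((ℓ:ℝ))
  have h2 := ((hasDerivAt_sin_half x).pow 2).const_mul ((ℓ:ℝ) + 1)
  refine (h1.add h2).congr_deriv ?_
  norm_num
  ring

lemma hasDerivAt_D (x : ℝ) :
    HasDerivAt (fun y => 2 * Real.sin (y/2) * Real.cos (y/2))
      (Real.cos (x/2) ^ 2 - Real.sin (x/2) ^ 2) x := by
  have h1 := ((hasDerivAt_sin_half x).const_mul 2).mul (hasDerivAt_cos_half x)
  refine h1.congr_deriv ?_
  ring

lemma hasDerivAt_sc (x : ℝ) :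
    HasDerivAt (fun y => Real.sin (y/2) * Real.cos (y/2))
      ((Real.cos (x/2) ^ 2 - Real.sin (x/2) ^ 2) / 2) x := by
  have h1 := (hasDerivAt_sin_half x).mul (hasDerivAt_cos_half x)
  refine h1.congr_deriv ?_
  ring

lemma hasDerivAt_B (ℓ : ℕ) (hx : x ∈ Set.Ioo 0 π) :
    HasDerivAt (Bf ℓ)
      ((Real.sin (x/2) * Real.cos (x/2) * (2 * Real.sin (x/2) * Real.cos (x/2)) -
          ((ℓ : ℝ) * Real.cos (x/2) ^ 2 + ((ℓ : ℝ) + 1) * Real.sin (x/2) ^ 2) *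
            (Real.cos (x/2) ^ 2 - Real.sin (x/2) ^ 2)) /
        (2 * Real.sin (x/2) * Real.cos (x/2)) ^ 2) x := by
  have hs := sin_half_pos hx
  have hc := cos_half_pos hx
  have hD0 : 2 * Real.sin (x/2) * Real.cos (x/2) ≠ 0 := by positivity
  exact (hasDerivAt_N ℓ x).div (hasDerivAt_D x) hD0

lemma hasDerivAt_Wd (ω ℓ : ℕ) (hx : x ∈ Set.Ioo 0 π) :
    HasDerivAt (Wd ω ℓ) (Wdd ω ℓ x) x := by
  have hs := sin_half_pos hx
  have hc := cos_half_pos hx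
  have hu0 : 0 < Real.sin (x/2) ^ 2 := pow_pos hs 2
  have hu1 := sin_half_sq_lt_one hx
  have hF := hasDerivAt_Fsum (a := aP ω) (b := bP ω) (cP_pos ℓ) hu0 hu1
  have hFc := hF.comp x (hasDerivAt_u x)
  have hF1 := hasDerivAt_Fsum1 (a := aP ω) (b := bP ω) (cP_pos ℓ) hu0 hu1
  have hF1c := hF1.comp x (hasDerivAt_u x)
  have hG := hasDerivAt_G ℓ hx
  have hB := hasDerivAt_B ℓ hx
  have hGB := hG.mul hB
  have h1 := hGB.mul hFc
  have h2 := hG.mul (hF1c.mul (hasDerivAt_sc x))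
  have htot := h1.add h2
  refine htot.congr_deriv ?_
  simp only [Function.comp_apply, Pi.mul_apply]
  unfold Wdd Bf
  field_simp
  ring
end part3


section part4

lemma sqrt_factor (ℓ : ℕ) {s c A : ℝ} (hs : 0 < s) (hc : 0 < c) (hA : 0 ≤ A) :
    Real.sqrt (A / (2 * s * c)) * (c ^ 2 / s ^ 2) ^ ((-(1 / 2 : ℝ) - (ℓ : ℝ)) / 2)
      = Real.sqrt A / Real.sqrt 2 * (s ^ ℓ / c ^ (ℓ + 1)) := by
  set μ : ℝ := -(1 / 2 : ℝ) - (ℓ : ℝ) with hμ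
  have hpow : (c ^ 2 / s ^ 2 : ℝ) ^ (μ / 2) = c ^ μ / s ^ μ := by
    rw [Real.div_rpow (by positivity) (by positivity)]
    congr 1
    · rw [← Real.rpow_natCast c 2, ← Real.rpow_mul hc.le]
      congr 1
      push_cast
      ring
    · rw [← Real.rpow_natCast s 2, ← Real.rpow_mul hs.le]
      congr 1
      push_cast
      ring
  have hsqrt : Real.sqrt (A / (2 * s * c)) =
      Real.sqrt A / (Real.sqrt 2 * s ^ ((1:ℝ)/2) * c ^ ((1:ℝ)/2)) := by
    rw [Real.sqrt_div hA, Real.sqrt_mul (by positivity : (0:ℝ) ≤ 2 * s),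
      Real.sqrt_mul (by norm_num : (0:ℝ) ≤ 2), ← Real.sqrt_eq_rpow, ← Real.sqrt_eq_rpow]
  rw [hpow, hsqrt]
  have e1 : c ^ μ / c ^ ((1:ℝ)/2) = (c ^ (ℓ + 1))⁻¹ := by
    rw [← Real.rpow_sub hc]
    rw [show μ - (1:ℝ)/2 = -(((ℓ + 1 : ℕ) : ℝ)) by rw [hμ]; push_cast; ring]
    rw [Real.rpow_neg hc.le, Real.rpow_natCast]
  have e2 : s ^ ((1:ℝ)/2) * s ^ μ = (s ^ ℓ)⁻¹ := by
    rw [← Real.rpow_add hs]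
    rw [show (1:ℝ)/2 + μ = -((ℓ : ℕ) : ℝ) by rw [hμ]; push_cast; ring]
    rw [Real.rpow_neg hs.le, Real.rpow_natCast]
  have hX : (0:ℝ) < s ^ ((1:ℝ)/2) := Real.rpow_pos_of_pos hs _
  have hY : (0:ℝ) < c ^ ((1:ℝ)/2) := Real.rpow_pos_of_pos hc _
  have hP : (0:ℝ) < s ^ μ := Real.rpow_pos_of_pos hs _
  have hQ : (0:ℝ) < c ^ μ := Real.rpow_pos_of_pos hc _
  have hsl : (s : ℝ) ^ ℓ = (s ^ ((1:ℝ)/2) * s ^ μ)⁻¹ := by rw [e2, inv_inv]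
  have hcl : ((c : ℝ) ^ (ℓ + 1))⁻¹ = c ^ μ / c ^ ((1:ℝ)/2) := e1.symm
  have hcl' : (c : ℝ) ^ (ℓ + 1) = c ^ ((1:ℝ)/2) / c ^ μ := by
    rw [← inv_inv (c ^ (ℓ+1)), hcl]
    field_simp
  rw [hsl, hcl']
  have hs2 : Real.sqrt 2 > 0 := by positivity
  field_simp [hX.ne', hY.ne', hP.ne', hQ.ne', hs2.ne']
end part4


section part5

noncomputable def Kc (ω ℓ : ℕ) : ℝ :=
  Real.sqrt (π * Mcoef ω ℓ / (2 * ((ω : ℝ) + 1) ^ 2)) /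
    Real.Gamma (1 - (-(1 / 2) - (ℓ : ℝ))) / Real.sqrt 2

lemma Mcoef_pos {ω ℓ : ℕ} (h : ℓ ≤ ω) : 0 < Mcoef ω ℓ := by
  unfold Mcoef
  apply Finset.prod_pos
  intro n hn
  rw [Finset.mem_range] at hn
  have h1 : n ≤ ω := le_trans (Nat.lt_succ_iff.mp hn) h
  have h2 : (n : ℝ) ≤ (ω : ℝ) := Nat.cast_le.mpr h1
  have h3 : (0 : ℝ) ≤ n := Nat.cast_nonneg n
  nlinarith

lemma Rclosed_eq (ω ℓ : ℕ) (hℓω : ℓ ≤ ω) {x : ℝ} (hx : x ∈ Set.Ioo 0 π) :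
    Rclosed ω ℓ x = Kc ω ℓ * Wf ω ℓ x := by
  have hs := sin_half_pos hx
  have hc := cos_half_pos hx
  have hM := Mcoef_pos hℓω
  have hπ := Real.pi_pos
  have hA : (0:ℝ) ≤ π * Mcoef ω ℓ / (2 * ((ω : ℝ) + 1) ^ 2) := by positivity
  have hΓ : Real.Gamma (1 - (-(1 / 2) - (ℓ : ℝ))) ≠ 0 := by
    apply (Real.Gamma_pos_of_pos _).ne'
    have := Nat.cast_nonneg (α := ℝ) ℓ
    linarith
  unfold Rclosed legendreP Kc Wf Gf aP bP cP
  rw [hyp2F1_eq_Fsum]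
  have hp := Real.sin_sq_add_cos_sq (x / 2)
  have he := cos_eq_half x
  have h1 : (1 - Real.cos x) / 2 = Real.sin (x / 2) ^ 2 := by linarith
  have h2 : (1 + Real.cos x) / (1 - Real.cos x) = Real.cos (x / 2) ^ 2 / Real.sin (x / 2) ^ 2 := by
    have hss : Real.sin (x / 2) ^ 2 ≠ 0 := by positivity
    have h1c : 1 - Real.cos x = 2 * Real.sin (x / 2) ^ 2 := by linarith
    have h2c : 1 + Real.cos x = 2 * Real.cos (x / 2) ^ 2 := by linarith
    rw [h1c, h2c]
    field_simp
  rw [h1, h2, sin_eq_half x]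
  set SA := Real.sqrt (π * Mcoef ω ℓ / (2 * ((ω : ℝ) + 1) ^ 2)) with hSA
  set PW := (Real.cos (x / 2) ^ 2 / Real.sin (x / 2) ^ 2) ^ ((-(1 / 2 : ℝ) - (ℓ : ℝ)) / 2) with hPW
  have hpw : (0:ℝ) < PW := Real.rpow_pos_of_pos (by positivity) _
  have hsf := sqrt_factor ℓ hs hc hA
  have hsq : Real.sqrt (π * Mcoef ω ℓ /
      (2 * ((ω : ℝ) + 1) ^ 2 * (2 * Real.sin (x / 2) * Real.cos (x / 2)))) =
      SA / Real.sqrt 2 * (Real.sin (x / 2) ^ ℓ / Real.cos (x / 2) ^ (ℓ + 1)) / PW := by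
    rw [← div_div, eq_div_iff hpw.ne']
    exact hsf
  rw [hsq]
  have helper : ∀ q w e r t y : ℝ, q ≠ 0 → r ≠ 0 → t ≠ 0 →
      (w / Real.sqrt 2 * (e / r) / q) * (1 / t * q * y) = w / t / Real.sqrt 2 * (e / r * y) := by
    intro q w e r t y hq hr ht
    have h2 : Real.sqrt 2 ≠ 0 := by positivity
    field_simp
  exact helper PW SA (Real.sin (x / 2) ^ ℓ) (Real.cos (x / 2) ^ (ℓ + 1))
    (Real.Gamma (1 - (-(1 / 2) - (ℓ : ℝ)))) _ hpw.ne' (pow_ne_zero _ hc.ne') hΓ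
end part5


/-- For the closed model `K = 1`, `R_{ωℓ}` solves the radial equation
`(1/sin²χ)(sin²χ R')' + ((ω+1)² − 1 − ℓ(ℓ+1)/sin²χ) R = 0` on `(0, π)`. -/
theorem radial_closed (ω ℓ : ℕ) (hℓω : ℓ ≤ ω) (χ : ℝ) (hχ : χ ∈ Set.Ioo 0 π) :
    (1 / Real.sin χ ^ 2) *
        deriv (fun x => Real.sin x ^ 2 * deriv (Rclosed ω ℓ) x) χ +
      (((ω : ℝ) + 1) ^ 2 - 1 - (ℓ * (ℓ + 1) : ℝ) / Real.sin χ ^ 2) * Rclosed ω ℓ χ = 0 := by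
  have hs := sin_half_pos hχ
  have hc := cos_half_pos hχ
  have hu0 : 0 < Real.sin (χ / 2) ^ 2 := pow_pos hs 2
  have hu1 := sin_half_sq_lt_one hχ
  have hder : ∀ x ∈ Set.Ioo 0 π, deriv (Rclosed ω ℓ) x = Kc ω ℓ * Wd ω ℓ x := by
    intro x hx
    have h1 : deriv (Rclosed ω ℓ) x = deriv (fun y => Kc ω ℓ * Wf ω ℓ y) x := by
      apply Filter.EventuallyEq.deriv_eq
      filter_upwards [isOpen_Ioo.mem_nhds hx] with y hy
      exact Rclosed_eq ω ℓ hℓω hy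
    rw [h1]
    exact ((hasDerivAt_W ω ℓ hx).const_mul (Kc ω ℓ)).deriv
  have hev : (fun x => Real.sin x ^ 2 * deriv (Rclosed ω ℓ) x) =ᶠ[nhds χ]
      (fun x => Real.sin x ^ 2 * (Kc ω ℓ * Wd ω ℓ x)) := by
    filter_upwards [isOpen_Ioo.mem_nhds hχ] with y hy
    rw [hder y hy]
  rw [hev.deriv_eq]
  have hD : HasDerivAt (fun x => Real.sin x ^ 2 * (Kc ω ℓ * Wd ω ℓ x))
      ((2 * Real.sin χ ^ 1 * Real.cos χ) * (Kc ω ℓ * Wd ω ℓ χ) +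
        Real.sin χ ^ 2 * (Kc ω ℓ * Wdd ω ℓ χ)) χ :=
    ((Real.hasDerivAt_sin χ).pow 2).mul ((hasDerivAt_Wd ω ℓ hχ).const_mul (Kc ω ℓ))
  rw [hD.deriv, Rclosed_eq ω ℓ hℓω hχ]
  have hode := hyp_ode (aP ω) (bP ω) (cP ℓ) (cP_pos ℓ) hu0 hu1
  have ha : aP ω + bP ω + 1 = 2 := by unfold aP bP; ring
  have hab : aP ω * bP ω = -((((ω:ℝ) + 1) ^ 2 - 1) + 3 / 4) := by unfold aP bP; ring
  rw [ha, hab] at hode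
  unfold Wf Wd Wdd Bf
  rw [sin_eq_half χ, cos_eq_half χ]
  have hp := Real.sin_sq_add_cos_sq (χ / 2)
  set S := Real.sin (χ / 2) with hS
  set C := Real.cos (χ / 2) with hC
  set F := Fsum (aP ω) (bP ω) (cP ℓ) (S ^ 2) with hF
  set F1 := Fsum1 (aP ω) (bP ω) (cP ℓ) (S ^ 2) with hF1
  set F2 := Fsum2 (aP ω) (bP ω) (cP ℓ) (S ^ 2) with hF2
  set G := Gf ℓ χ with hG
  set K := Kc ω ℓ with hK
  set L : ℝ := (ℓ : ℝ) with hL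
  set Om : ℝ := (ω : ℝ) with hOm
  set CC : ℝ := cP ℓ with hCCdef
  have hcc : CC = L + 3 / 2 := by rw [hCCdef, hL]; unfold cP; ring
  field_simp
  have hv : C ^ 2 = 1 - S ^ 2 := by linarith
  rw [show C ^ 4 = (C ^ 2) ^ 2 by ring, hv]
  linear_combination (4 * S ^ 2 * (1 - S ^ 2) * K * G) * hode - (4 * S ^ 2 * (1 - S ^ 2) * K * G * F1) * hcc
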